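/- Write a = λ₁² + λ₂² − λ₃² − λ₄² and b = λ₁λ₃ + λ₂λ₄. The Ricci tensors ρ of R and ρᴰ of K satisfy: ρ(E₁,E₁) = ρ(E₂,E₂) = −ρ(E₃,E₃) = −ρ(E₄,E₄) = −2a − 2(μ₁² − μ₂²); ρ(E₁,E₃) = ρ(E₂,E₄) = −4b − 4μ₁μ₂; ρ(E₅,E₅) = 4(μ₁² − μ₂²); ρᴰ(E₁,E₁) = ρᴰ(E₂,E₂) = −ρᴰ(E₃,E₃) = −ρᴰ(E₄,E₄) = −2a − 4(μ₁² − μ₂²); ρᴰ(E₁,E₃) = ρᴰ(E₂,E₄) = −4b − 8μ₁μ₂. -/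
import Mathlib


noncomputable section

/-- The underlying 5-dimensional real vector space. -/
abbrev V : Type := Fin 5 → ℝ

/-- The basis `E₁,…,E₅` (0-indexed: `E 0 = E₁`, …, `E 4 = E₅`). -/
def E (i : Fin 5) : V := Pi.single i 1

/-- `ξ = E₅`. -/
def xiV : V := E 4

/-- The almost contact endomorphism `φ`. -/
def phiV (x : V) : V := ![-x 2, -x 3, x 0, x 1, 0]

/-- The contact form `η`. -/
def etaF (x : V) : ℝ := x 4

/-- The B-metric `g`. -/
def gB (x y : V) : ℝ := x 0 * y 0 + x 1 * y 1 - x 2 * y 2 - x 3 * y 3 + x 4 * y 4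

/-- The signs `εᵢ = g(Eᵢ,Eᵢ)`. -/
def eps : Fin 5 → ℝ := ![1, 1, -1, -1, 1]

/-- The Lie bracket: the unique skew-symmetric bilinear bracket whose only nonzero
basis brackets are `[E₁,E₂] = -[E₃,E₄] = -λ₁E₁ - λ₂E₂ + λ₃E₃ + λ₄E₄ + 2μ₁E₅` and
`[E₁,E₄] = -[E₂,E₃] = -λ₃E₁ - λ₄E₂ - λ₁E₃ - λ₂E₄ + 2μ₂E₅`. -/
def brkt (l1 l2 l3 l4 m1 m2 : ℝ) (x y : V) : V :=
  (x 0 * y 1 - x 1 * y 0 - x 2 * y 3 + x 3 * y 2) •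
    (![-l1, -l2, l3, l4, 2 * m1] : V) +
  (x 0 * y 3 - x 3 * y 0 - x 1 * y 2 + x 2 * y 1) •
    (![-l3, -l4, -l1, -l2, 2 * m2] : V)

/-- The torsion `T(x,y) = 2(η(x)∇_yξ − η(y)∇_xξ + g(∇_xξ,y)ξ)`. -/
def Tors (nabla : V → V → V) (x y : V) : V :=
  (2 : ℝ) • (etaF x • nabla y xiV - etaF y • nabla x xiV + gB (nabla x xiV) y • xiV)

/-- The φKT-connection `D_x y = ∇_x y + (1/2)T(x,y)`. -/
def Dconn (nabla : V → V → V) (x y : V) : V :=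
  nabla x y + (1 / 2 : ℝ) • Tors nabla x y

/-- Curvature of a connection: `∇_x∇_y z − ∇_y∇_x z − ∇_{[x,y]}z`. -/
def curv (br conn : V → V → V) (x y z : V) : V :=
  conn x (conn y z) - conn y (conn x z) - conn (br x y) z

/-- Curvature (0,4)-tensor. -/
def curv4 (br conn : V → V → V) (x y z w : V) : ℝ := gB (curv br conn x y z) w

/-- Ricci tensor. -/
def ricci (br conn : V → V → V) (y z : V) : ℝ :=
  ∑ i : Fin 5, eps i * curv4 br conn (E i) y z (E i)

/-- Scalar curvature. -/
def scal (br conn : V → V → V) : ℝ :=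
  ∑ i : Fin 5, ∑ j : Fin 5, eps i * eps j * curv4 br conn (E i) (E j) (E j) (E i)

/-- `(∇_xφ)y = ∇_x(φy) − φ(∇_x y)`. -/
def nphi (nabla : V → V → V) (x y : V) : V := nabla x (phiV y) - phiV (nabla x y)

/-- The square norm `‖∇φ‖²`. -/
def sqnormNphi (nabla : V → V → V) : ℝ :=
  ∑ i : Fin 5, ∑ k : Fin 5,
    eps i * eps k * gB (nphi nabla (E i) (E k)) (nphi nabla (E i) (E k))

/-- Explicit Levi-Civita connection from the Koszul formula. -/
def NN (l1 l2 l3 l4 m1 m2 : ℝ) (x y : V) : V := fun i =>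
  eps i * ((gB (brkt l1 l2 l3 l4 m1 m2 x y) (E i) +
      gB (brkt l1 l2 l3 l4 m1 m2 (E i) x) y +
      gB (brkt l1 l2 l3 l4 m1 m2 (E i) y) x) / 2)

def NNc (l1 l2 l3 l4 m1 m2 : ℝ) (x y : V) : V :=
  ![-l1*x 0*y 1 + l1*x 2*y 3 - l2*x 1*y 1 + l2*x 3*y 3 - l3*x 0*y 3 - l3*x 2*y 1 - l4*x 1*y 3 - l4*x 3*y 1 + m1*x 1*y 4 + m1*x 4*y 1 + m2*x 3*y 4 + m2*x 4*y 3,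
    l1*x 0*y 0 - l1*x 2*y 2 + l2*x 1*y 0 - l2*x 3*y 2 + l3*x 0*y 2 + l3*x 2*y 0 + l4*x 1*y 2 + l4*x 3*y 0 - m1*x 0*y 4 - m1*x 4*y 0 - m2*x 2*y 4 - m2*x 4*y 2,
    -l1*x 0*y 3 - l1*x 2*y 1 - l2*x 1*y 3 - l2*x 3*y 1 + l3*x 0*y 1 - l3*x 2*y 3 + l4*x 1*y 1 - l4*x 3*y 3 + m1*x 3*y 4 + m1*x 4*y 3 - m2*x 1*y 4 - m2*x 4*y 1,
    l1*x 0*y 2 + l1*x 2*y 0 + l2*x 1*y 2 + l2*x 3*y 0 - l3*x 0*y 0 + l3*x 2*y 2 - l4*x 1*y 0 + l4*x 3*y 2 - m1*x 2*y 4 - m1*x 4*y 2 + m2*x 0*y 4 + m2*x 4*y 0,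
    m1*x 0*y 1 - m1*x 1*y 0 - m1*x 2*y 3 + m1*x 3*y 2 + m2*x 0*y 3 - m2*x 1*y 2 + m2*x 2*y 1 - m2*x 3*y 0]

lemma hE0 : E 0 = ![1,0,0,0,0] := by funext j; fin_cases j <;> simp [E, Pi.single_apply]
lemma hE1 : E 1 = ![0,1,0,0,0] := by funext j; fin_cases j <;> simp [E, Pi.single_apply]
lemma hE2 : E 2 = ![0,0,1,0,0] := by funext j; fin_cases j <;> simp [E, Pi.single_apply]
lemma hE3 : E 3 = ![0,0,0,1,0] := by funext j; fin_cases j <;> simp [E, Pi.single_apply]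
lemma hE4 : E 4 = ![0,0,0,0,1] := by funext j; fin_cases j <;> simp [E, Pi.single_apply]

set_option maxHeartbeats 2000000 in
theorem statement_15 (l1 l2 l3 l4 m1 m2 : ℝ)
    (nabla : V → V → V)
    (hkos : ∀ x y z : V, 2 * gB (nabla x y) z =
      gB (brkt l1 l2 l3 l4 m1 m2 x y) z + gB (brkt l1 l2 l3 l4 m1 m2 z x) y +
        gB (brkt l1 l2 l3 l4 m1 m2 z y) x) :
    ∀ a b : ℝ, a = l1 ^ 2 + l2 ^ 2 - l3 ^ 2 - l4 ^ 2 → b = l1 * l3 + l2 * l4 →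
      (ricci (brkt l1 l2 l3 l4 m1 m2) nabla (E 0) (E 0) = -2 * a - 2 * (m1 ^ 2 - m2 ^ 2) ∧
      ricci (brkt l1 l2 l3 l4 m1 m2) nabla (E 1) (E 1) = -2 * a - 2 * (m1 ^ 2 - m2 ^ 2) ∧
      -(ricci (brkt l1 l2 l3 l4 m1 m2) nabla (E 2) (E 2)) = -2 * a - 2 * (m1 ^ 2 - m2 ^ 2) ∧
      -(ricci (brkt l1 l2 l3 l4 m1 m2) nabla (E 3) (E 3)) = -2 * a - 2 * (m1 ^ 2 - m2 ^ 2) ∧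
      ricci (brkt l1 l2 l3 l4 m1 m2) nabla (E 0) (E 2) = -4 * b - 4 * m1 * m2 ∧
      ricci (brkt l1 l2 l3 l4 m1 m2) nabla (E 1) (E 3) = -4 * b - 4 * m1 * m2 ∧
      ricci (brkt l1 l2 l3 l4 m1 m2) nabla (E 4) (E 4) = 4 * (m1 ^ 2 - m2 ^ 2) ∧
      ricci (brkt l1 l2 l3 l4 m1 m2) (Dconn nabla) (E 0) (E 0) = -2 * a - 4 * (m1 ^ 2 - m2 ^ 2) ∧
      ricci (brkt l1 l2 l3 l4 m1 m2) (Dconn nabla) (E 1) (E 1) = -2 * a - 4 * (m1 ^ 2 - m2 ^ 2) ∧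
      -(ricci (brkt l1 l2 l3 l4 m1 m2) (Dconn nabla) (E 2) (E 2)) = -2 * a - 4 * (m1 ^ 2 - m2 ^ 2) ∧
      -(ricci (brkt l1 l2 l3 l4 m1 m2) (Dconn nabla) (E 3) (E 3)) = -2 * a - 4 * (m1 ^ 2 - m2 ^ 2) ∧
      ricci (brkt l1 l2 l3 l4 m1 m2) (Dconn nabla) (E 0) (E 2) = -4 * b - 8 * m1 * m2 ∧
      ricci (brkt l1 l2 l3 l4 m1 m2) (Dconn nabla) (E 1) (E 3) = -4 * b - 8 * m1 * m2) := by
  have h0 : ∀ x y : V, nabla x y 0 = -l1*x 0*y 1 + l1*x 2*y 3 - l2*x 1*y 1 + l2*x 3*y 3 - l3*x 0*y 3 - l3*x 2*y 1 - l4*x 1*y 3 - l4*x 3*y 1 + m1*x 1*y 4 + m1*x 4*y 1 + m2*x 3*y 4 + m2*x 4*y 3 := by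
    intro x y
    have h := hkos x y (E 0)
    simp only [gB, brkt, hE0, Pi.add_apply, Pi.smul_apply, smul_eq_mul,
      Matrix.cons_val_zero, Matrix.cons_val_one, Matrix.head_cons, Matrix.cons_val_two,
      Matrix.tail_cons, Matrix.cons_val_three, Matrix.cons_val_four] at h
    linear_combination h / 2
  have h1 : ∀ x y : V, nabla x y 1 = l1*x 0*y 0 - l1*x 2*y 2 + l2*x 1*y 0 - l2*x 3*y 2 + l3*x 0*y 2 + l3*x 2*y 0 + l4*x 1*y 2 + l4*x 3*y 0 - m1*x 0*y 4 - m1*x 4*y 0 - m2*x 2*y 4 - m2*x 4*y 2 := by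
    intro x y
    have h := hkos x y (E 1)
    simp only [gB, brkt, hE1, Pi.add_apply, Pi.smul_apply, smul_eq_mul,
      Matrix.cons_val_zero, Matrix.cons_val_one, Matrix.head_cons, Matrix.cons_val_two,
      Matrix.tail_cons, Matrix.cons_val_three, Matrix.cons_val_four] at h
    linear_combination h / 2
  have h2 : ∀ x y : V, nabla x y 2 = -l1*x 0*y 3 - l1*x 2*y 1 - l2*x 1*y 3 - l2*x 3*y 1 + l3*x 0*y 1 - l3*x 2*y 3 + l4*x 1*y 1 - l4*x 3*y 3 + m1*x 3*y 4 + m1*x 4*y 3 - m2*x 1*y 4 - m2*x 4*y 1 := by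
    intro x y
    have h := hkos x y (E 2)
    simp only [gB, brkt, hE2, Pi.add_apply, Pi.smul_apply, smul_eq_mul,
      Matrix.cons_val_zero, Matrix.cons_val_one, Matrix.head_cons, Matrix.cons_val_two,
      Matrix.tail_cons, Matrix.cons_val_three, Matrix.cons_val_four] at h
    linear_combination -h / 2
  have h3 : ∀ x y : V, nabla x y 3 = l1*x 0*y 2 + l1*x 2*y 0 + l2*x 1*y 2 + l2*x 3*y 0 - l3*x 0*y 0 + l3*x 2*y 2 - l4*x 1*y 0 + l4*x 3*y 2 - m1*x 2*y 4 - m1*x 4*y 2 + m2*x 0*y 4 + m2*x 4*y 0 := by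
    intro x y
    have h := hkos x y (E 3)
    simp only [gB, brkt, hE3, Pi.add_apply, Pi.smul_apply, smul_eq_mul,
      Matrix.cons_val_zero, Matrix.cons_val_one, Matrix.head_cons, Matrix.cons_val_two,
      Matrix.tail_cons, Matrix.cons_val_three, Matrix.cons_val_four] at h
    linear_combination -h / 2
  have h4 : ∀ x y : V, nabla x y 4 = m1*x 0*y 1 - m1*x 1*y 0 - m1*x 2*y 3 + m1*x 3*y 2 + m2*x 0*y 3 - m2*x 1*y 2 + m2*x 2*y 1 - m2*x 3*y 0 := by
    intro x y
    have h := hkos x y (E 4)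
    simp only [gB, brkt, hE4, Pi.add_apply, Pi.smul_apply, smul_eq_mul,
      Matrix.cons_val_zero, Matrix.cons_val_one, Matrix.head_cons, Matrix.cons_val_two,
      Matrix.tail_cons, Matrix.cons_val_three, Matrix.cons_val_four] at h
    linear_combination h / 2
  intro a b ha hb
  subst ha hb
  refine ⟨?_, ?_, ?_, ?_, ?_, ?_, ?_, ?_, ?_, ?_, ?_, ?_, ?_⟩ <;>
  · simp only [ricci, curv4, curv, Dconn, Tors, Fin.sum_univ_five, hE0, hE1, hE2, hE3, hE4,
      xiV, etaF, eps, gB, brkt, h0, h1, h2, h3, h4, Pi.add_apply, Pi.sub_apply,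
      Pi.smul_apply, smul_eq_mul, Matrix.cons_val_zero, Matrix.cons_val_one,
      Matrix.head_cons, Matrix.cons_val_two, Matrix.tail_cons, Matrix.cons_val_three,
      Matrix.cons_val_four, mul_zero, zero_mul, mul_one, one_mul, add_zero, zero_add,
      sub_zero, zero_sub, neg_zero, mul_neg, neg_neg]
    ring
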